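/- Let f : N → R^m be smooth with N an n-manifold, and define Γ : N^{(2)} × (R^m)^m → R^{2m} by Γ(q,q',p) = (G_{(p,A)}(f(q)), G_{(p,A)}(f(q'))), where N^{(2)} = {(q,q') ∈ N² : q ≠ q'}. If f is injective and all entries of A are nonzero, then Γ is transverse to the diagonal Δ = {(y,y) : y ∈ R^m} ⊆ R^{2m}: in fact, for each fixed (q,q') with q ≠ q', the partial derivative of Γ in the p-variables already spans a complement of T Δ. -/

import Mathlib

open Manifold

/-- The generalized distance-squared mapping `G_{(p,A)} : ℝ^m → ℝ^m`. -/
noncomputable def gdsq {m : ℕ} (p : Fin m → Fin m → ℝ) (A : Matrix (Fin m) (Fin m) ℝ)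
    (x : Fin m → ℝ) : Fin m → ℝ :=
  fun i => ∑ j, A i j * (x j - p i j) ^ 2
noncomputable def gdsqDeriv {m : ℕ} (B : Fin m → Fin m → ℝ) :
    (Fin m → Fin m → ℝ) →L[ℝ] (Fin m → ℝ) :=
  ContinuousLinearMap.pi fun i =>
    ∑ j, B i j • ((ContinuousLinearMap.proj j).comp
      (ContinuousLinearMap.proj (R := ℝ) (φ := fun _ : Fin m => Fin m → ℝ) i))

lemma gdsqDeriv_apply {m : ℕ} (B : Fin m → Fin m → ℝ) (v : Fin m → Fin m → ℝ) (i : Fin m) :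
    gdsqDeriv B v i = ∑ j, B i j * v i j := by
  simp [gdsqDeriv, ContinuousLinearMap.sum_apply]

lemma hasFDerivAt_gdsq {m : ℕ} (A : Matrix (Fin m) (Fin m) ℝ) (y : Fin m → ℝ)
    (p : Fin m → Fin m → ℝ) :
    HasFDerivAt (fun p' => gdsq p' A y)
      (gdsqDeriv (fun i j => -2 * A i j * (y j - p i j))) p := by
  rw [show (fun p' => gdsq p' A y) = fun p' i => ∑ j, A i j * (y j - p' i j) ^ 2 from rfl]
  apply hasFDerivAt_pi.mpr
  intro i
  apply HasFDerivAt.fun_sum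
  intro j _
  have hπ : HasFDerivAt (fun p' : Fin m → Fin m → ℝ => p' i j)
      ((ContinuousLinearMap.proj j).comp
        (ContinuousLinearMap.proj (R := ℝ) (φ := fun _ : Fin m => Fin m → ℝ) i)) p :=
    ((ContinuousLinearMap.proj j).comp
        (ContinuousLinearMap.proj (R := ℝ) (φ := fun _ : Fin m => Fin m → ℝ) i)).hasFDerivAt
  have hg : HasDerivAt (fun t : ℝ => A i j * (y j - t) ^ 2)
      (-2 * A i j * (y j - p i j)) (p i j) := by
    have h1 : HasDerivAt (fun t : ℝ => y j - t) (-1) (p i j) := by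
      simpa using (hasDerivAt_id (p i j)).const_sub (y j)
    have h2 := (h1.pow 2).const_mul (A i j)
    refine h2.congr_deriv ?_
    ring
  have := hg.comp_hasFDerivAt p hπ
  exact this

/-- If `f : N → ℝ^m` is smooth and injective and `A` has all entries nonzero, then the map
`Γ(q, q', p) = (G_{(p,A)}(f q), G_{(p,A)}(f q'))` is transverse to the diagonal
`Δ ⊆ ℝ^{2m}`: for each fixed pair `q ≠ q'` and every `p`, the image of the derivative in
the `p`-variables together with `T Δ` already spans all of `ℝ^m × ℝ^m`. -/
theorem stmt16 {n m : ℕ}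
    {N : Type*} [TopologicalSpace N] [ChartedSpace (EuclideanSpace ℝ (Fin n)) N]
    [IsManifold (𝓡 n) (⊤ : ℕ∞) N]
    (f : N → (Fin m → ℝ)) (hf : ContMDiff (𝓡 n) 𝓘(ℝ, Fin m → ℝ) (⊤ : ℕ∞) f)
    (hfinj : Function.Injective f)
    (A : Matrix (Fin m) (Fin m) ℝ) (hA : ∀ i j, A i j ≠ 0) :
    ∀ q q' : N, q ≠ q' → ∀ p : Fin m → Fin m → ℝ,
      LinearMap.range
          ((fderiv ℝ (fun p' : Fin m → Fin m → ℝ => (gdsq p' A (f q), gdsq p' A (f q'))) p :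
            (Fin m → Fin m → ℝ) →ₗ[ℝ] (Fin m → ℝ) × (Fin m → ℝ)))
        ⊔ LinearMap.ker
            (LinearMap.fst ℝ (Fin m → ℝ) (Fin m → ℝ) - LinearMap.snd ℝ (Fin m → ℝ) (Fin m → ℝ))
        = ⊤ := by
  intro q q' hqq p
  set y := f q
  set y' := f q'
  have hyy : y ≠ y' := fun h => hqq (hfinj h)
  obtain ⟨j0, hj0⟩ : ∃ j, y j ≠ y' j := Function.ne_iff.mp hyy
  set B : Fin m → Fin m → ℝ := fun i j => -2 * A i j * (y j - p i j)
  set B' : Fin m → Fin m → ℝ := fun i j => -2 * A i j * (y' j - p i j)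
  have hD : HasFDerivAt (fun p' : Fin m → Fin m → ℝ => (gdsq p' A y, gdsq p' A y'))
      ((gdsqDeriv B).prod (gdsqDeriv B')) p :=
    HasFDerivAt.prodMk (hasFDerivAt_gdsq A y p) (hasFDerivAt_gdsq A y' p)
  rw [hD.fderiv]
  rw [Submodule.eq_top_iff']
  rintro ⟨a, b⟩
  set d : Fin m → ℝ := fun i => (a i - b i) / (2 * A i j0 * (y' j0 - y j0))
  set v : Fin m → Fin m → ℝ := fun i j => if j = j0 then d i else 0
  refine Submodule.mem_sup.mpr ⟨((gdsqDeriv B).prod (gdsqDeriv B')) v,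
    LinearMap.mem_range.mpr ⟨v, rfl⟩,
    (a, b) - ((gdsqDeriv B).prod (gdsqDeriv B')) v, ?_, by abel⟩
  rw [LinearMap.mem_ker]
  have hsum : ∀ C : Fin m → Fin m → ℝ, ∀ i, gdsqDeriv C v i = C i j0 * d i := by
    intro C i
    rw [gdsqDeriv_apply]
    simp [v, mul_ite, Finset.sum_ite_eq']
  funext i
  simp only [LinearMap.sub_apply, LinearMap.fst_apply, LinearMap.snd_apply,
    ContinuousLinearMap.prod_apply, Prod.fst_sub, Prod.snd_sub, Pi.sub_apply, Pi.zero_apply]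
  rw [hsum B i, hsum B' i]
  have h2 : 2 * A i j0 * (y' j0 - y j0) ≠ 0 := by
    have := hA i j0
    have := sub_ne_zero_of_ne hj0.symm
    positivity
  simp only [B, B', d]
  field_simp [hA i j0, sub_ne_zero_of_ne hj0.symm]
  ring
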